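/- Let ℓ be odd and let G be an ℓ-regular graph with a perfect matching M. If each connected component of G minus the edges of M is isomorphic to the ((ℓ-1)/2)-th power of a cycle, then G admits an M-centered P_ℓ-decomposition. -/

import Mathlib

open SimpleGraph

/-- The `k`-th power of the cycle on `m` vertices. -/
def cyclePower (m k : ℕ) : SimpleGraph (ZMod m) where
  Adj x y := x ≠ y ∧ ∃ r : ℤ, r.natAbs ≤ k ∧ x - y = (r : ZMod m)
  symm := by
    constructor
    rintro x y ⟨hxy, r, hr, h⟩
    exact ⟨hxy.symm, -r, by simpa using hr, by rw [Int.cast_neg, ← h, neg_sub]⟩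
  loopless := by constructor; rintro x ⟨h, -⟩; exact h rfl

section Aux

variable {V : Type*} {G : SimpleGraph V}

/-- A walk from a vertex function with adjacency proofs. -/
def walkOfFn (G : SimpleGraph V) : (n : ℕ) → (f : ℕ → V) →
    (∀ j < n, G.Adj (f j) (f (j+1))) → G.Walk (f 0) (f n)
  | 0, _, _ => .nil
  | (n+1), f, h => .cons (h 0 (Nat.succ_pos n))
      (walkOfFn G n (fun j => f (j+1)) (fun j hj => h (j+1) (by omega)))

@[simp] lemma walkOfFn_length (n : ℕ) (f : ℕ → V) (h : ∀ j < n, G.Adj (f j) (f (j+1))) :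
    (walkOfFn G n f h).length = n := by
  induction n generalizing f with
  | zero => rfl
  | succ n ih => simp [walkOfFn, ih]

lemma walkOfFn_edges (n : ℕ) (f : ℕ → V) (h : ∀ j < n, G.Adj (f j) (f (j+1))) :
    (walkOfFn G n f h).edges = (List.range n).map (fun j => s(f j, f (j+1))) := by
  induction n generalizing f with
  | zero => rfl
  | succ n ih =>
    simp only [walkOfFn, Walk.edges_cons, ih, List.range_succ_eq_map, List.map_cons,
      List.map_map]
    rfl

lemma walkOfFn_support (n : ℕ) (f : ℕ → V) (h : ∀ j < n, G.Adj (f j) (f (j+1))) :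
    (walkOfFn G n f h).support = (List.range (n+1)).map f := by
  induction n generalizing f with
  | zero => rfl
  | succ n ih =>
    simp only [walkOfFn, Walk.support_cons, ih, List.range_succ_eq_map, List.map_cons,
      List.map_map]
    rfl

lemma walkOfFn_isPath (n : ℕ) (f : ℕ → V) (h : ∀ j < n, G.Adj (f j) (f (j+1)))
    (hinj : ∀ i ≤ n, ∀ j ≤ n, f i = f j → i = j) : (walkOfFn G n f h).IsPath := by
  refine Walk.IsPath.mk' ?_
  rw [walkOfFn_support]
  refine List.Nodup.map_on ?_ List.nodup_range
  intro i hi j hj hij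
  exact hinj i (by simpa using Nat.lt_succ_iff.mp (List.mem_range.mp hi))
    j (by simpa using Nat.lt_succ_iff.mp (List.mem_range.mp hj)) hij

lemma mem_walkOfFn_edges {n : ℕ} {f : ℕ → V} {h : ∀ j < n, G.Adj (f j) (f (j+1))}
    {e : Sym2 V} : e ∈ (walkOfFn G n f h).edges ↔ ∃ j < n, e = s(f j, f (j+1)) := by
  rw [walkOfFn_edges]
  simp only [List.mem_map, List.mem_range]
  exact ⟨fun ⟨j, hj, he⟩ => ⟨j, hj, he.symm⟩, fun ⟨j, hj, he⟩ => ⟨j, hj, he.symm⟩⟩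

end Aux

/-- offsets of the zigzag path through the interval `[0,k]`. -/
def zagNat (k j : ℕ) : ℕ := if j % 2 = 0 then j / 2 else k - j / 2

lemma zagNat_le {k j : ℕ} (hj : j ≤ k) : zagNat k j ≤ k := by
  unfold zagNat; split <;> omega

lemma zagNat_zero (k : ℕ) : zagNat k 0 = 0 := by simp [zagNat]

section ZM
variable {m k : ℕ}

lemma natCast_inj' (hm : 2*k+1 ≤ m) {a b : ℕ} (ha : a ≤ 2*k) (hb : b ≤ 2*k)
    (h : (a : ZMod m) = b) : a = b := by
  haveI : NeZero m := ⟨by omega⟩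
  have h2 := congrArg ZMod.val h
  rwa [ZMod.val_cast_of_lt (by omega), ZMod.val_cast_of_lt (by omega)] at h2

lemma natCast_zero' (hm : 2*k+1 ≤ m) {a : ℕ} (ha : a ≤ 2*k) (h : (a : ZMod m) = 0) : a = 0 :=
  natCast_inj' hm ha (by omega) (by simpa using h)

lemma zag_vertex_inj (hm : 2*k+1 ≤ m) {x : ZMod m} {i j : ℕ} (hi : i ≤ k) (hj : j ≤ k)
    (h : x + (zagNat k i : ZMod m) = x + (zagNat k j : ZMod m)) : i = j := by
  have h2 := add_left_cancel h
  have h3 := natCast_inj' hm (by have := zagNat_le hi; omega) (by have := zagNat_le hj; omega) h2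
  unfold zagNat at h3; split_ifs at h3 <;> omega

lemma zag_cross (hm : 2*k+1 ≤ m) {x y : ZMod m} {i j : ℕ} (hi : i ≤ k) (hj : j ≤ k)
    (h : x + (zagNat k i : ZMod m) = y + (zagNat k j : ZMod m)) :
    x = y ∨ (x ≠ y ∧ ∃ r : ℤ, r.natAbs ≤ k ∧ x - y = (r : ZMod m)) := by
  by_cases hxy : x = y
  · exact Or.inl hxy
  · refine Or.inr ⟨hxy, (zagNat k j : ℤ) - (zagNat k i : ℤ), ?_, ?_⟩
    · have h1 := zagNat_le hi; have h2 := zagNat_le hj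
      omega
    · have : x - y = (zagNat k j : ZMod m) - (zagNat k i : ZMod m) := by
        linear_combination h
      rw [this]; push_cast; ring

lemma zag_adj (hm : 2*k+1 ≤ m) (x : ZMod m) {i : ℕ} (hi : i < k) :
    (cyclePower m k).Adj (x + (zagNat k i : ZMod m)) (x + (zagNat k (i+1) : ZMod m)) := by
  refine ⟨fun h => by have := zag_vertex_inj hm (by omega) (by omega) h; omega,
    (zagNat k i : ℤ) - (zagNat k (i+1) : ℤ), ?_, ?_⟩
  · unfold zagNat; split_ifs <;> omega
  · push_cast; ring

lemma zag_edge {x : ZMod m} {i : ℕ} (hi : i < k) :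
    s(x + (zagNat k i : ZMod m), x + (zagNat k (i+1) : ZMod m)) =
      s(x + (((i+1)/2 : ℕ) : ZMod m), x + ((((i+1)/2 + (k-i)) : ℕ) : ZMod m)) := by
  rcases Nat.even_or_odd i with he | ho
  · have h1 : zagNat k i = (i+1)/2 := by
      unfold zagNat; rw [Nat.even_iff] at he; split_ifs <;> omega
    have h2 : zagNat k (i+1) = (i+1)/2 + (k-i) := by
      unfold zagNat; rw [Nat.even_iff] at he; split_ifs <;> omega
    rw [h1, h2]
  · have h1 : zagNat k i = (i+1)/2 + (k-i) := by
      unfold zagNat; rw [Nat.odd_iff] at ho; split_ifs <;> omega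
    have h2 : zagNat k (i+1) = (i+1)/2 := by
      unfold zagNat; rw [Nat.odd_iff] at ho; split_ifs <;> omega
    rw [h1, h2, Sym2.eq_swap]

lemma edge_inj (hm : 2*k+1 ≤ m) {x y : ZMod m} {i j : ℕ} (hi : i < k) (hj : j < k)
    (h : s(x + (((i+1)/2 : ℕ) : ZMod m), x + ((((i+1)/2 + (k-i)) : ℕ) : ZMod m)) =
      s(y + (((j+1)/2 : ℕ) : ZMod m), y + ((((j+1)/2 + (k-j)) : ℕ) : ZMod m))) :
    x = y ∧ i = j := by
  rw [Sym2.eq_iff] at h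
  rcases h with ⟨h1, h2⟩ | ⟨h1, h2⟩
  · have hd : ((k-i : ℕ) : ZMod m) = ((k-j : ℕ) : ZMod m) := by
      push_cast at h1 h2 ⊢
      linear_combination h2 - h1
    have := natCast_inj' hm (by omega) (by omega) hd
    have hij : i = j := by omega
    subst hij
    exact ⟨add_right_cancel h1, rfl⟩
  · exfalso
    have hz : (((k-i) + (k-j) : ℕ) : ZMod m) = 0 := by
      push_cast at h1 h2 ⊢
      linear_combination h2 - h1
    have := natCast_zero' hm (by omega) hz
    omega

lemma zedge_inj (hm : 2*k+1 ≤ m) {x y : ZMod m} {i j : ℕ} (hi : i < k) (hj : j < k)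
    (h : s(x + (zagNat k i : ZMod m), x + (zagNat k (i+1) : ZMod m)) =
      s(y + (zagNat k j : ZMod m), y + (zagNat k (j+1) : ZMod m))) : x = y ∧ i = j := by
  rw [zag_edge hi, zag_edge hj] at h
  exact edge_inj hm hi hj h

lemma adj_exists (hm : 2*k+1 ≤ m) {x y : ZMod m} (h : (cyclePower m k).Adj x y) :
    ∃ (z : ZMod m) (d : ℕ), 1 ≤ d ∧ d ≤ k ∧ s(x, y) = s(z, z + (d : ZMod m)) := by
  obtain ⟨hne, r, hr, hxy⟩ := h
  rcases le_or_gt 0 r with hr0 | hr0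
  · refine ⟨y, r.toNat, ?_, by omega, ?_⟩
    · rcases Nat.eq_zero_or_pos r.toNat with h0 | h1
      · exfalso; apply hne
        have : r = 0 := by omega
        rw [this] at hxy; push_cast at hxy
        have : x - y = 0 := hxy
        rwa [sub_eq_zero] at this
      · exact h1
    · have hx : x = y + ((r.toNat : ℕ) : ZMod m) := by
        have : ((r.toNat : ℕ) : ZMod m) = ((r : ℤ) : ZMod m) := by
          rw [← Int.cast_natCast]; congr 1 <;> omega
        rw [this, ← hxy]; ring
      rw [hx, Sym2.eq_swap]
  · refine ⟨x, (-r).toNat, by omega, by omega, ?_⟩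
    have hy : y = x + (((-r).toNat : ℕ) : ZMod m) := by
      have : (((-r).toNat : ℕ) : ZMod m) = ((-r : ℤ) : ZMod m) := by
        rw [← Int.cast_natCast]; congr 1 <;> omega
      rw [this]; push_cast; rw [← hxy]; ring
    rw [hy]

lemma card_ge (x : ZMod m) (hdeg : ((cyclePower m k).neighborSet x).ncard = 2*k)
    (hm0 : m ≠ 0) : 2*k+1 ≤ m := by
  haveI : NeZero m := ⟨hm0⟩
  have hx : x ∉ (cyclePower m k).neighborSet x := fun h => (cyclePower m k).loopless.irrefl _ h
  have hins : (insert x ((cyclePower m k).neighborSet x)).ncard = 2*k+1 := by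
    rw [Set.ncard_insert_of_notMem hx (Set.toFinite _), hdeg]
  have hle : (insert x ((cyclePower m k).neighborSet x)).ncard ≤ m := by
    have := Set.ncard_le_ncard (Set.subset_univ
      (insert x ((cyclePower m k).neighborSet x))) (Set.toFinite _)
    rwa [Set.ncard_univ, Nat.card_eq_fintype_card, ZMod.card] at this
  omega

end ZM

/-- Let `ℓ` be odd and let `G` be an `ℓ`-regular graph with a perfect matching
`M`. If each connected component of `G` minus the edges of `M` is isomorphic to the
`((ℓ-1)/2)`-th power of a cycle, then `G` admits an `M`-centered `P_ℓ`-decomposition: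
a decomposition into paths of `ℓ` edges whose middle edge lies in `M`. -/
theorem stmt_7 {V : Type*} [Fintype V]
    (ℓ : ℕ) (hodd : Odd ℓ)
    (G : SimpleGraph V) (hreg : ∀ v : V, (G.neighborSet v).ncard = ℓ)
    (M : G.Subgraph) (hM : M.IsPerfectMatching)
    (hcomp : ∀ c : (G.deleteEdges M.edgeSet).ConnectedComponent,
      ∃ m : ℕ, Nonempty (((G.deleteEdges M.edgeSet).induce c.supp) ≃g
        cyclePower m ((ℓ - 1) / 2))) :
    ∃ D : Set (Σ u : V, Σ v : V, G.Walk u v),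
      (∀ T ∈ D, T.2.2.IsPath ∧ T.2.2.length = ℓ ∧
        ∃ e ∈ M.edgeSet, T.2.2.edges[(ℓ - 1) / 2]? = some e) ∧
      ∀ e ∈ G.edgeSet, ∃! T, T ∈ D ∧ e ∈ T.2.2.edges := by
  classical
  obtain ⟨t, ht⟩ := hodd
  set k := (ℓ - 1) / 2 with hkdef
  have hℓ : ℓ = 2*k+1 := by omega
  set G' := G.deleteEdges M.edgeSet with hG'def
  -- the matching as a function
  have hmf : ∀ v : V, ∃! w, M.Adj v w := Subgraph.isPerfectMatching_iff.mp hM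
  set f : V → V := fun v => (hmf v).choose with hfdef
  have hfadj : ∀ v, M.Adj v (f v) := fun v => (hmf v).choose_spec.1
  have hfuniq : ∀ v w, M.Adj v w → w = f v := fun v w h => (hmf v).choose_spec.2 w h
  have hfG : ∀ v, G.Adj v (f v) := fun v => M.adj_sub (hfadj v)
  have hff : ∀ v, f (f v) = v := fun v => ((hmf (f v)).choose_spec.2 v (hfadj v).symm).symm
  have hfne : ∀ v, f v ≠ v := fun v => (hfG v).ne'
  -- the component isomorphisms
  choose m hiso using hcomp
  let φ : ∀ c : G'.ConnectedComponent, (G'.induce c.supp) ≃g cyclePower (m c) k :=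
    fun c => (hiso c).some
  let cc : V → G'.ConnectedComponent := fun v => G'.connectedComponentMk v
  have hmemsupp : ∀ v, v ∈ (cc v).supp := fun v => rfl
  have hsuppc : ∀ (c) (a : V), a ∈ c.supp → cc a = c := fun c a h =>
    (ConnectedComponent.mem_supp_iff _ _).mp h
  have hccadj : ∀ a b, G'.Adj a b → cc a = cc b := fun a b h =>
    ConnectedComponent.connectedComponentMk_eq_of_adj h
  -- G' adjacency
  have hG'adj : ∀ a b, G'.Adj a b ↔ G.Adj a b ∧ s(a, b) ∉ M.edgeSet := by
    intro a b; rw [hG'def]; simp [deleteEdges_adj]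
  -- degrees in G'
  have hnbr : ∀ v, G'.neighborSet v = G.neighborSet v \ {f v} := by
    intro v; ext u
    simp only [mem_neighborSet, Set.mem_diff, Set.mem_singleton_iff, hG'adj,
      Subgraph.mem_edgeSet]
    constructor
    · rintro ⟨h1, h2⟩; exact ⟨h1, fun he => h2 (he ▸ hfadj v)⟩
    · rintro ⟨h1, h2⟩; exact ⟨h1, fun hM' => h2 (hfuniq v u hM')⟩
  have hdegG' : ∀ v, (G'.neighborSet v).ncard = 2*k := by
    intro v
    rw [hnbr v, Set.ncard_diff_singleton_of_mem (show f v ∈ G.neighborSet v from hfG v), hreg v]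
    omega
  -- the components are large
  have hmle : ∀ c, 2*k+1 ≤ m c := by
    intro c
    obtain ⟨v, hv⟩ := c.exists_rep
    have hvs : v ∈ c.supp := (ConnectedComponent.mem_supp_iff _ _).mpr hv
    have himg : G'.neighborSet v = Subtype.val '' ((G'.induce c.supp).neighborSet ⟨v, hvs⟩) := by
      ext u; constructor
      · intro hu
        have hus : u ∈ c.supp := by
          rw [ConnectedComponent.mem_supp_iff, ← hv]
          exact (hccadj v u hu).symm
        exact ⟨⟨u, hus⟩, by simpa using hu, rfl⟩
      · rintro ⟨⟨u, hus⟩, hadj, rfl⟩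
        simpa using hadj
    have h1 : ((G'.induce c.supp).neighborSet ⟨v, hvs⟩).ncard = 2*k := by
      have h0 := hdegG' v
      rwa [himg, Set.ncard_image_of_injective _ Subtype.val_injective] at h0
    have h2 : ((cyclePower (m c) k).neighborSet ((φ c) ⟨v, hvs⟩)).ncard = 2*k := by
      rw [← h1, ← Nat.card_coe_set_eq, ← Nat.card_coe_set_eq]
      exact (Nat.card_congr ((φ c).mapNeighborSet ⟨v, hvs⟩)).symm
    have hm0 : m c ≠ 0 := by
      intro h0
      have hfin : Finite (ZMod (m c)) := Finite.of_equiv _ (φ c).toEquiv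
      rw [h0] at hfin
      exact not_finite_iff_infinite.mpr (ZMod.infinite) hfin
    exact card_ge _ h2 hm0
  -- the coordinate machinery
  let ψ : ∀ c : G'.ConnectedComponent, ZMod (m c) → V := fun c z => ((φ c).symm z : V)
  have hψmem : ∀ (c : G'.ConnectedComponent) (z : ZMod (m c)), ψ c z ∈ c.supp := fun c z => ((φ c).symm z).2
  have hψcc : ∀ (c : G'.ConnectedComponent) (z : ZMod (m c)), cc (ψ c z) = c := fun c z => hsuppc c _ (hψmem c z)
  have hψinj : ∀ c : G'.ConnectedComponent, Function.Injective (ψ c) := fun c z z' h =>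
    (φ c).symm.toEquiv.injective (Subtype.coe_injective h)
  have hψadjG' : ∀ (c : G'.ConnectedComponent) (z z' : ZMod (m c)), (cyclePower (m c) k).Adj z z' → G'.Adj (ψ c z) (ψ c z') := by
    intro c z z' h
    have h2 := (φ c).symm.map_adj_iff.mpr h
    simpa using h2
  have hφadj : ∀ (c : G'.ConnectedComponent) (a b : c.supp), G'.Adj ↑a ↑b →
      (cyclePower (m c) k).Adj (φ c a) (φ c b) := by
    intro c a b h
    exact (φ c).map_adj_iff.mpr (by simpa using h)
  have hψφ : ∀ (c : G'.ConnectedComponent) (a : V) (h : a ∈ c.supp), ψ c (φ c ⟨a, h⟩) = a := by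
    intro c a h
    have h2 : (φ c).symm ((φ c) ⟨a, h⟩) = ⟨a, h⟩ := (φ c).toEquiv.symm_apply_apply ⟨a, h⟩
    show (((φ c).symm ((φ c) ⟨a, h⟩) : ↥c.supp) : V) = a
    rw [h2]
  let w : ∀ c : G'.ConnectedComponent, ZMod (m c) → ℕ → V := fun c z i => ψ c (z + (zagNat k i : ZMod (m c)))
  have hw0 : ∀ (c : G'.ConnectedComponent) (z : ZMod (m c)), w c z 0 = ψ c z := by
    intro c z; simp only [w, zagNat_zero, Nat.cast_zero, add_zero]
  let x : ∀ v : V, ZMod (m (cc v)) := fun v => φ (cc v) ⟨v, hmemsupp v⟩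
  have hψx : ∀ v, ψ (cc v) (x v) = v := fun v => hψφ (cc v) v (hmemsupp v)
  have hwC : ∀ (v : V) (c : G'.ConnectedComponent) (h : cc v = c) (i : ℕ),
      ∀ hv : v ∈ c.supp, w (cc v) (x v) i = w c (φ c ⟨v, hv⟩) i := by
    intro v c h i hv; subst h; rfl
  have hwx : ∀ (c : G'.ConnectedComponent) (z : ZMod (m c)) (i : ℕ), w (cc (ψ c z)) (x (ψ c z)) i = w c z i := by
    intro c z i
    rw [hwC (ψ c z) c (hψcc c z) i (hψmem c z)]
    congr 2
    rw [show (⟨ψ c z, hψmem c z⟩ : ↥c.supp) = (φ c).symm z from Subtype.ext rfl]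
    exact (φ c).apply_symm_apply z
  -- basic facts about w
  have hwmem : ∀ (c : G'.ConnectedComponent) (z : ZMod (m c)) (i : ℕ), w c z i ∈ c.supp := fun c z i => hψmem c _
  have hwinj : ∀ (c : G'.ConnectedComponent) (z z' : ZMod (m c)) (i j : ℕ), i ≤ k → j ≤ k → w c z i = w c z' j →
      z + (zagNat k i : ZMod (m c)) = z' + (zagNat k j : ZMod (m c)) := by
    intro c z z' i j hi hj h; exact hψinj c h
  have hwadj : ∀ (c : G'.ConnectedComponent) (z : ZMod (m c)) (i : ℕ), i < k → G'.Adj (w c z i) (w c z (i+1)) := by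
    intro c z i hi
    exact hψadjG' c _ _ (zag_adj (hmle c) z hi)
  -- the path function
  let F : V → ℕ → V := fun u j =>
    if j ≤ k then w (cc u) (x u) (k - j) else w (cc (f u)) (x (f u)) (j - (k+1))
  have hFu : ∀ u, F u k = u := by
    intro u
    simp only [F]
    rw [if_pos (le_refl k), Nat.sub_self, hw0, hψx]
  have hFfu : ∀ u, F u (k+1) = f u := by
    intro u
    simp only [F]
    rw [if_neg (by omega), Nat.sub_self, hw0, hψx]
  have hFle : ∀ u j, j ≤ k → F u j = w (cc u) (x u) (k - j) := by
    intro u j hj; simp only [F]; rw [if_pos hj]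
  have hFgt : ∀ u j, k < j → F u j = w (cc (f u)) (x (f u)) (j - (k+1)) := by
    intro u j hj; simp only [F]; rw [if_neg (by omega)]
  have hG'le : G' ≤ G := by rw [hG'def]; exact deleteEdges_le _
  have hFadj : ∀ u, ∀ j < ℓ, G.Adj (F u j) (F u (j+1)) := by
    intro u j hj
    rcases lt_trichotomy j k with h1 | h1 | h1
    · rw [hFle u j (by omega), hFle u (j+1) (by omega)]
      have h2 := hwadj (cc u) (x u) (k - (j+1)) (by omega)
      rw [show k - (j+1) + 1 = k - j by omega] at h2
      exact hG'le h2.symm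
    · subst h1
      rw [hFu, hFfu]; exact hfG u
    · rw [hFgt u j h1, hFgt u (j+1) (by omega)]
      have h2 := hwadj (cc (f u)) (x (f u)) (j - (k+1)) (by omega)
      rw [show j - (k+1) + 1 = j + 1 - (k+1) by omega] at h2
      exact hG'le h2
  -- vertices on the two sides never collide
  have hcol : ∀ u a b, a ≤ k → b ≤ k → w (cc u) (x u) a ≠ w (cc (f u)) (x (f u)) b := by
    intro u a b ha hb hcontra
    have hc : cc u = cc (f u) := by
      have h1 := hwmem (cc u) (x u) a
      have h2 := hwmem (cc (f u)) (x (f u)) b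
      rw [hcontra] at h1
      exact (hsuppc _ _ h1).symm.trans (hsuppc _ _ h2)
    have hfumem : f u ∈ (cc u).supp := by rw [hc]; exact hmemsupp (f u)
    rw [hwC (f u) (cc u) hc.symm b hfumem] at hcontra
    have hz := hwinj (cc u) (x u) (φ (cc u) ⟨f u, hfumem⟩) a b ha hb hcontra
    rcases zag_cross (hmle (cc u)) ha hb hz with heq | hadj
    · have : u = f u := by
        have h3 := congrArg (ψ (cc u)) heq
        rwa [hψx, hψφ] at h3
      exact hfne u this.symm
    · have hadj' : (cyclePower (m (cc u)) k).Adj (x u) (φ (cc u) ⟨f u, hfumem⟩) := hadj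
      have h4 := hψadjG' (cc u) _ _ hadj'
      rw [hψx, hψφ] at h4
      rw [hG'adj] at h4
      exact h4.2 (Subgraph.mem_edgeSet.mpr (hfadj u))
  have hFinj : ∀ u, ∀ i ≤ ℓ, ∀ j ≤ ℓ, F u i = F u j → i = j := by
    intro u i hi j hj h
    rcases le_or_gt i k with h1 | h1 <;> rcases le_or_gt j k with h2 | h2
    · rw [hFle u i h1, hFle u j h2] at h
      have h3 := hwinj _ _ _ _ _ (by omega) (by omega) h
      have h4 := zag_vertex_inj (hmle (cc u)) (by omega) (by omega) h3
      omega
    · exact absurd (by rw [hFle u i h1, hFgt u j h2] at h; exact h)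
        (hcol u (k - i) (j - (k+1)) (by omega) (by omega))
    · exact absurd (by rw [hFle u j h2, hFgt u i h1] at h; exact h.symm)
        (hcol u (k - j) (i - (k+1)) (by omega) (by omega))
    · rw [hFgt u i h1, hFgt u j h2] at h
      have h3 := hwinj _ _ _ _ _ (by omega) (by omega) h
      have h4 := zag_vertex_inj (hmle (cc (f u))) (by omega) (by omega) h3
      omega
  -- the walks
  let W : ∀ u : V, G.Walk (F u 0) (F u ℓ) := fun u => walkOfFn G ℓ (F u) (hFadj u)
  let Θ : V → (Σ u : V, Σ v : V, G.Walk u v) := fun u => ⟨F u 0, F u ℓ, W u⟩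
  have hWedges : ∀ u (e : Sym2 V), e ∈ (W u).edges ↔ ∃ j < ℓ, e = s(F u j, F u (j+1)) :=
    fun u e => mem_walkOfFn_edges
  have hmidW : ∀ u, s(u, f u) ∈ (W u).edges := by
    intro u; rw [hWedges]; exact ⟨k, by omega, by rw [hFu, hFfu]⟩
  have hsideW : ∀ u v, v = u ∨ v = f u → ∀ i, i < k →
      s(w (cc v) (x v) i, w (cc v) (x v) (i+1)) ∈ (W u).edges := by
    intro u v hv i hik
    rw [hWedges]
    rcases hv with rfl | rfl
    · refine ⟨k - 1 - i, by omega, ?_⟩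
      have e1 : F v (k-1-i) = w (cc v) (x v) (i+1) := by
        rw [hFle v (k-1-i) (by omega)]; congr 1 <;> omega
      have e2 : F v (k-1-i+1) = w (cc v) (x v) i := by
        rw [hFle v (k-1-i+1) (by omega)]; congr 1 <;> omega
      rw [e1, e2]; exact Sym2.eq_swap
    · refine ⟨k + 1 + i, by omega, ?_⟩
      have e1 : F u (k+1+i) = w (cc (f u)) (x (f u)) i := by
        rw [hFgt u (k+1+i) (by omega)]; congr 1 <;> omega
      have e2 : F u (k+1+i+1) = w (cc (f u)) (x (f u)) (i+1) := by
        rw [hFgt u (k+1+i+1) (by omega)]; congr 1 <;> omega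
      rw [e1, e2]
  have hWcases : ∀ u (e : Sym2 V), e ∈ (W u).edges → e = s(u, f u) ∨
      ∃ v, (v = u ∨ v = f u) ∧ ∃ i < k, e = s(w (cc v) (x v) i, w (cc v) (x v) (i+1)) := by
    intro u e he
    rw [hWedges] at he
    obtain ⟨j, hj, rfl⟩ := he
    rcases lt_trichotomy j k with h1 | h1 | h1
    · right
      refine ⟨u, Or.inl rfl, k - j - 1, by omega, ?_⟩
      have e1 : F u j = w (cc u) (x u) (k - j - 1 + 1) := by
        rw [hFle u j (by omega)]; congr 1 <;> omega
      have e2 : F u (j+1) = w (cc u) (x u) (k - j - 1) := by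
        rw [hFle u (j+1) (by omega)]; congr 1 <;> omega
      rw [e1, e2]; exact Sym2.eq_swap
    · left; subst h1; rw [hFu, hFfu]
    · right
      refine ⟨f u, Or.inr rfl, j - (k+1), by omega, ?_⟩
      have e1 : F u j = w (cc (f u)) (x (f u)) (j - (k+1)) := hFgt u j h1
      have e2 : F u (j+1) = w (cc (f u)) (x (f u)) (j - (k+1) + 1) := by
        rw [hFgt u (j+1) (by omega)]; congr 1 <;> omega
      rw [e1, e2]
  -- a zigzag edge determines its owner
  have hzuniq : ∀ v v' i i', i < k → i' < k →
      s(w (cc v) (x v) i, w (cc v) (x v) (i+1)) =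
        s(w (cc v') (x v') i', w (cc v') (x v') (i'+1)) →
      v = v' := by
    intro v v' i i' hi hi' h
    have hc : cc v = cc v' := by
      have h1 := hwmem (cc v) (x v) i
      have h2 : w (cc v) (x v) i ∈ (cc v').supp := by
        rcases Sym2.eq_iff.mp h with ⟨ha, hb⟩ | ⟨ha, hb⟩
        · rw [ha]; exact hwmem _ _ _
        · rw [ha]; exact hwmem _ _ _
      exact (hsuppc _ _ h1).symm.trans (hsuppc _ _ h2)
    have hv'mem : v' ∈ (cc v).supp := by rw [hc]; exact hmemsupp v'
    rw [hwC v' (cc v) hc.symm i' hv'mem, hwC v' (cc v) hc.symm (i'+1) hv'mem] at h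
    have hco : s(x v + (zagNat k i : ZMod (m (cc v))), x v + (zagNat k (i+1) : ZMod (m (cc v)))) =
        s(φ (cc v) ⟨v', hv'mem⟩ + (zagNat k i' : ZMod (m (cc v))),
          φ (cc v) ⟨v', hv'mem⟩ + (zagNat k (i'+1) : ZMod (m (cc v)))) := by
      rcases Sym2.eq_iff.mp h with ⟨ha, hb⟩ | ⟨ha, hb⟩
      · rw [Sym2.eq_iff]; exact Or.inl ⟨hψinj _ ha, hψinj _ hb⟩
      · rw [Sym2.eq_iff]; exact Or.inr ⟨hψinj _ ha, hψinj _ hb⟩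
    have hf2 := zedge_inj (hmle (cc v)) hi hi' hco
    have h3 := congrArg (ψ (cc v)) hf2.1
    rwa [hψx, hψφ] at h3
  -- every G'-edge is covered by some zigzag
  have hcover : ∀ a b, G'.Adj a b → ∃ v0, ∃ i < k,
      s(a, b) = s(w (cc v0) (x v0) i, w (cc v0) (x v0) (i+1)) := by
    intro a b hab
    have hbmem : b ∈ (cc a).supp := by
      rw [ConnectedComponent.mem_supp_iff]; exact (hccadj a b hab).symm
    have hadj2 : (cyclePower (m (cc a)) k).Adj (φ (cc a) ⟨a, hmemsupp a⟩) (φ (cc a) ⟨b, hbmem⟩) :=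
      hφadj (cc a) _ _ hab
    obtain ⟨z, d, hd1, hdk, hzd⟩ := adj_exists (hmle (cc a)) hadj2
    have hjk : k - d < k := by omega
    set z0 : ZMod (m (cc a)) := z - ((((k-d)+1)/2 : ℕ) : ZMod (m (cc a))) with hz0def
    have c1 : z0 + ((((k-d)+1)/2 : ℕ) : ZMod (m (cc a))) = z := by
      rw [hz0def]; ring
    have c2 : z0 + (((((k-d)+1)/2 + (k - (k-d))) : ℕ) : ZMod (m (cc a))) =
        z + (d : ZMod (m (cc a))) := by
      rw [show (((k-d)+1)/2 + (k - (k-d)) : ℕ) = ((k-d)+1)/2 + d from by omega]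
      push_cast
      rw [← add_assoc]
      rw [show z0 + ((((k-d)+1)/2 : ℕ) : ZMod (m (cc a))) = z from c1]
    have hedgeq : s(z0 + (zagNat k (k-d) : ZMod (m (cc a))),
        z0 + (zagNat k ((k-d)+1) : ZMod (m (cc a)))) = s(z, z + (d : ZMod (m (cc a)))) := by
      rw [zag_edge hjk, c1, c2]
    refine ⟨ψ (cc a) z0, k - d, hjk, ?_⟩
    rw [hwx (cc a) z0 (k-d), hwx (cc a) z0 ((k-d)+1)]
    have hmap := congrArg (Sym2.map (ψ (cc a))) (hzd.trans hedgeq.symm)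
    rw [Sym2.map_pair_eq, Sym2.map_pair_eq, hψφ, hψφ] at hmap
    exact hmap
  -- representatives: one endpoint of each matching edge
  let eV : V ≃ Fin (Fintype.card V) := Fintype.equivFin V
  let R : Set V := {u | (eV u : ℕ) < (eV (f u) : ℕ)}
  have hRne : ∀ u, (eV u : ℕ) ≠ (eV (f u) : ℕ) := by
    intro u h
    exact hfne u (eV.injective (Fin.ext h)).symm
  have hRor : ∀ u, u ∈ R ∨ f u ∈ R := by
    intro u
    simp only [R, Set.mem_setOf_eq, hff]
    have := hRne u
    omega
  have hRuniq : ∀ u1 u2, u1 ∈ R → u2 ∈ R → (u2 = u1 ∨ u2 = f u1) → u2 = u1 := by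
    intro u1 u2 h1 h2 h
    rcases h with h | h
    · exact h
    · exfalso
      subst h
      simp only [R, Set.mem_setOf_eq, hff] at h1 h2
      omega
  let pick : V → V := fun v => if v ∈ R then v else f v
  have hpickR : ∀ v, pick v ∈ R := by
    intro v
    simp only [pick]
    split_ifs with h
    · exact h
    · rcases hRor v with h2 | h2
      · exact absurd h2 h
      · exact h2
  have hpickor : ∀ v, pick v = v ∨ pick v = f v := by
    intro v
    simp only [pick]
    split_ifs with h
    · exact Or.inl rfl
    · exact Or.inr rfl
  have hvpick : ∀ v, v = pick v ∨ v = f (pick v) := by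
    intro v
    rcases hpickor v with h | h
    · exact Or.inl h.symm
    · right; rw [h, hff]
  have hpair : ∀ u' v0, u' ∈ R → (u' = v0 ∨ u' = f v0) → u' = pick v0 := by
    intro u' v0 hu' h
    rcases hpickor v0 with hp | hp
    · refine hRuniq (pick v0) u' (hpickR v0) hu' ?_
      rcases h with h | h
      · exact Or.inl (by rw [h, hp])
      · exact Or.inr (by rw [h, hp])
    · refine hRuniq (pick v0) u' (hpickR v0) hu' ?_
      rcases h with h | h
      · exact Or.inr (by rw [h, hp, hff])
      · exact Or.inl (by rw [h, hp])
  have hzagnotM : ∀ v i, i < k → s(w (cc v) (x v) i, w (cc v) (x v) (i+1)) ∉ M.edgeSet := by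
    intro v i hi hmem
    have h2 := hwadj (cc v) (x v) i hi
    rw [hG'adj] at h2
    exact h2.2 hmem
  refine ⟨Θ '' R, ?_, ?_⟩
  · rintro T ⟨u, huR, rfl⟩
    refine ⟨walkOfFn_isPath ℓ (F u) (hFadj u) (hFinj u), walkOfFn_length ℓ (F u) (hFadj u), ?_⟩
    refine ⟨s(u, f u), Subgraph.mem_edgeSet.mpr (hfadj u), ?_⟩
    show (walkOfFn G ℓ (F u) (hFadj u)).edges[k]? = _
    rw [walkOfFn_edges, List.getElem?_map, List.getElem?_range (show k < ℓ by omega)]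
    show some s(F u k, F u (k+1)) = _
    rw [hFu, hFfu]
  · intro e he
    induction e using Sym2.ind with
    | _ a b =>
    rw [mem_edgeSet] at he
    by_cases heM : s(a, b) ∈ M.edgeSet
    · -- matching edge
      have hab : M.Adj a b := Subgraph.mem_edgeSet.mp heM
      have hbfa : b = f a := hfuniq a b hab
      have hsab : ∀ u', (u' = a ∨ u' = f a) → s(u', f u') = s(a, b) := by
        intro u' h
        rcases h with rfl | rfl
        · rw [hbfa]
        · rw [hff, hbfa, Sym2.eq_swap]
      refine ⟨Θ (pick a), ⟨⟨pick a, hpickR a, rfl⟩, ?_⟩, ?_⟩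
      · have h2 := hmidW (pick a)
        rwa [hsab (pick a) (hpickor a)] at h2
      · rintro T' ⟨⟨u', hu'R, rfl⟩, he'⟩
        rcases hWcases u' _ he' with hmid | ⟨v, hv, i, hik, hzag⟩
        · have hu'pair : u' = a ∨ u' = f a := by
            rw [Sym2.eq_iff] at hmid
            rcases hmid with ⟨h1, h2⟩ | ⟨h1, h2⟩
            · exact Or.inl h1.symm
            · exact Or.inr (h2.symm.trans hbfa)
          have h3 : u' = pick a := hpair u' a hu'R hu'pair
          rw [h3]
        · exact absurd (by rw [← hzag]; exact heM) (hzagnotM v i hik)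
    · -- non-matching edge
      have habG' : G'.Adj a b := by rw [hG'adj]; exact ⟨he, heM⟩
      obtain ⟨v0, i, hik, he0⟩ := hcover a b habG'
      refine ⟨Θ (pick v0), ⟨⟨pick v0, hpickR v0, rfl⟩, ?_⟩, ?_⟩
      · have h2 := hsideW (pick v0) v0 (hvpick v0) i hik
        rwa [← he0] at h2
      · rintro T' ⟨⟨u', hu'R, rfl⟩, he'⟩
        rcases hWcases u' _ he' with hmid | ⟨v', hv', i', hik', hzag'⟩
        · exact absurd (by rw [hmid]; exact Subgraph.mem_edgeSet.mpr (hfadj u')) heM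
        · have hvv : v' = v0 := hzuniq v' v0 i' i hik' hik (by rw [← hzag', ← he0])
          have hu'pair : u' = v0 ∨ u' = f v0 := by
            rcases hv' with h | h
            · exact Or.inl (h.symm.trans hvv)
            · exact Or.inr ((((congrArg f h).trans (hff u')).symm).trans (congrArg f hvv))
          have h3 : u' = pick v0 := hpair u' v0 hu'R hu'pair
          rw [h3]
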